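/- For all integers c ≥ 5 and g ≥ 2, t(c,g) + t_p(c,g) = t(c−2,g) + t_p(c−2,g) + t(c−2,g−1) + t_p(c−2,g−1) + 2·t_p(2c−4, 2g−1). (Equivalently, the number t̄(c,g) = (t(c,g)+t_p(c,g))/2 of 2-bridge knots with crossing number c and genus g satisfies t̄(c,g) = t̄(c−2,g) + t̄(c−2,g−1) + t_p(2c−4,2g−1).) -/
import Mathlib


/-- `tKnot c g` is t(c,g), the number of words in the partially double counted set T(c)
representing 2-bridge knots of crossing number `c` and genus `g`, given by the explicit
formula t(c,g) = (-1)^(c-1) * Σ_{n=0}^{c-2g-1} (-1)^n * binom(n+2g-1, n), the sum being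
empty when c - 2g - 1 < 0, and t(c,0) = 0. -/
def tKnot (c g : ℕ) : ℤ :=
  if g = 0 then 0
  else (-1 : ℤ) ^ (c - 1) *
    ∑ n ∈ Finset.range (c - 2 * g), (-1 : ℤ) ^ n * (Nat.choose (n + 2 * g - 1) n)

/-- `tpKnot c g` is t_p(c,g), the number of words of palindromic type representing
2-bridge knots of crossing number `c` and genus `g`, given by the explicit formula
t_p(c,g) = (-1)^(c'-g-1) * Σ_{n=0}^{c'-g-1} (-1)^n * binom(n+g-1, n) with
c' = ⌊(c+1)/2⌋, the sum being empty when c' - g - 1 < 0, and t_p(c,0) = 0. -/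
def tpKnot (c g : ℕ) : ℤ :=
  if g = 0 then 0
  else (-1 : ℤ) ^ ((c + 1) / 2 - g - 1) *
    ∑ n ∈ Finset.range ((c + 1) / 2 - g), (-1 : ℤ) ^ n * (Nat.choose (n + g - 1) n)


def Ssum (a m : ℕ) : ℤ :=
  ∑ n ∈ Finset.range m, (-1 : ℤ) ^ n * (Nat.choose (n + a - 1) n)

lemma Ssum_zero (a : ℕ) : Ssum a 0 = 0 := by simp [Ssum]

lemma Ssum_one (a : ℕ) : Ssum a 1 = 1 := by simp [Ssum]

lemma Ssum_two (a : ℕ) : Ssum a 2 = 1 - (a : ℤ) := by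
  simp [Ssum, Finset.sum_range_succ]; ring

lemma Ssum_succ (a m : ℕ) :
    Ssum a (m + 1) = Ssum a m + (-1 : ℤ) ^ m * (Nat.choose (m + a - 1) m) := by
  simp [Ssum, Finset.sum_range_succ]

lemma lemma1 (b m : ℕ) : Ssum (b + 2) (m + 1) + Ssum (b + 2) m = Ssum (b + 1) (m + 1) := by
  induction m with
  | zero => simp [Ssum]
  | succ m ih =>
    rw [Ssum_succ (b + 2) (m + 1), Ssum_succ (b + 2) m, Ssum_succ (b + 1) (m + 1)]
    have e1 : m + 1 + (b + 2) - 1 = (m + b + 1) + 1 := by omega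
    have e2 : m + (b + 2) - 1 = m + b + 1 := by omega
    have e3 : m + 1 + (b + 1) - 1 = m + b + 1 := by omega
    rw [e1, e2, e3]
    have pas : Nat.choose (m + b + 1 + 1) (m + 1)
        = Nat.choose (m + b + 1) m + Nat.choose (m + b + 1) (m + 1) := by
      rw [Nat.choose_succ_succ]
    rw [pas]
    rw [Ssum_succ (b + 2) m, e2] at ih
    push_cast
    linear_combination ih

lemma lemma2 (b m : ℕ) :
    Ssum (b + 3) (m + 2) - Ssum (b + 3) m - Ssum (b + 1) (m + 2) = -2 * Ssum (b + 2) (m + 1) := by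
  have h1 : Ssum (b + 3) (m + 2) + Ssum (b + 3) (m + 1) = Ssum (b + 2) (m + 2) := by
    have := lemma1 (b + 1) (m + 1)
    convert this using 3 <;> omega
  have h2 : Ssum (b + 2) (m + 2) + Ssum (b + 2) (m + 1) = Ssum (b + 1) (m + 2) := by
    have := lemma1 b (m + 1)
    convert this using 3 <;> omega
  have h3 : Ssum (b + 3) (m + 1) + Ssum (b + 3) m = Ssum (b + 2) (m + 1) := by
    have := lemma1 (b + 1) m
    convert this using 3 <;> omega
  linarith

lemma tKnot_eq (c g : ℕ) (hg : g ≠ 0) :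
    tKnot c g = (-1 : ℤ) ^ (c - 1) * Ssum (2 * g) (c - 2 * g) := by
  simp [tKnot, Ssum, hg]

lemma tpKnot_eq (c g : ℕ) (hg : g ≠ 0) :
    tpKnot c g = (-1 : ℤ) ^ ((c + 1) / 2 - g - 1) * Ssum g ((c + 1) / 2 - g) := by
  simp [tpKnot, Ssum, hg]

lemma lemP (C G : ℕ) :
    tpKnot (C + 5) (G + 2) = tpKnot (C + 3) (G + 2) + tpKnot (C + 3) (G + 1) := by
  rw [tpKnot_eq (C + 5) (G + 2) (by omega), tpKnot_eq (C + 3) (G + 2) (by omega),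
    tpKnot_eq (C + 3) (G + 1) (by omega)]
  have hd : 3 ≤ (C + 5 + 1) / 2 := by omega
  have hd2 : (C + 3 + 1) / 2 = (C + 5 + 1) / 2 - 1 := by omega
  set d := (C + 5 + 1) / 2 with hdef
  rw [hd2]
  rcases le_or_gt d (G + 2) with h | h
  · have e1 : d - (G + 2) = 0 := by omega
    have e2 : d - 1 - (G + 2) = 0 := by omega
    have e3 : d - 1 - (G + 1) = 0 := by omega
    rw [e1, e2, e3]
    simp [Ssum_zero]
  · obtain ⟨k, hk⟩ : ∃ k, d = G + 3 + k := ⟨d - (G + 3), by omega⟩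
    rcases k with _ | j
    · have e1 : d - (G + 2) = 1 := by omega
      have e1' : d - (G + 2) - 1 = 0 := by omega
      have e2 : d - 1 - (G + 2) = 0 := by omega
      have e3 : d - 1 - (G + 1) = 1 := by omega
      have e3' : d - 1 - (G + 1) - 1 = 0 := by omega
      rw [e1', e1, e2, e3', e3]
      simp [Ssum_zero, Ssum_one]
    · have e1 : d - (G + 2) = j + 2 := by omega
      have e1' : d - (G + 2) - 1 = j + 1 := by omega
      have e2 : d - 1 - (G + 2) = j + 1 := by omega
      have e2' : d - 1 - (G + 2) - 1 = j := by omega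
      have e3 : d - 1 - (G + 1) = j + 2 := by omega
      have e3' : d - 1 - (G + 1) - 1 = j + 1 := by omega
      rw [e1', e1, e2', e2, e3', e3]
      have key : Ssum (G + 2) (j + 2) + Ssum (G + 2) (j + 1) = Ssum (G + 1) (j + 2) := by
        have := lemma1 G (j + 1)
        convert this using 3 <;> omega
      have hp : (-1 : ℤ) ^ (j + 1) = -(-1 : ℤ) ^ j := by ring
      rw [hp, ← key]
      ring

lemma lemK (C G : ℕ) :
    tKnot (C + 5) (G + 2) = tKnot (C + 3) (G + 2) + tKnot (C + 3) (G + 1)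
      + 2 * tpKnot (2 * C + 6) (2 * G + 3) := by
  rw [tKnot_eq (C + 5) (G + 2) (by omega), tKnot_eq (C + 3) (G + 2) (by omega),
    tKnot_eq (C + 3) (G + 1) (by omega), tpKnot_eq (2 * C + 6) (2 * G + 3) (by omega)]
  have f1 : C + 5 - 1 = C + 4 := by omega
  have f2 : C + 3 - 1 = C + 2 := by omega
  have f3 : (2 * C + 6 + 1) / 2 = C + 3 := by omega
  have f4 : 2 * (G + 2) = 2 * G + 4 := by omega
  have f5 : 2 * (G + 1) = 2 * G + 2 := by omega
  rw [f1, f2, f3, f4, f5]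
  have sgn : (-1 : ℤ) ^ (C + 4) = (-1 : ℤ) ^ (C + 2) := by
    have : C + 4 = (C + 2) + 2 := by omega
    rw [this, pow_add]; norm_num
  rcases lt_or_ge C (2 * G) with h | h
  · have e1 : C + 5 - (2 * G + 4) = 0 := by omega
    have e2 : C + 3 - (2 * G + 4) = 0 := by omega
    have e3 : C + 3 - (2 * G + 2) = 0 := by omega
    have e4 : C + 3 - (2 * G + 3) = 0 := by omega
    rw [e1, e2, e3, e4]
    simp [Ssum_zero]
  · obtain ⟨k, rfl⟩ : ∃ k, C = 2 * G + k := ⟨C - 2 * G, by omega⟩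
    rcases k with _ | _ | j
    · -- C = 2G
      have e1 : 2 * G + 0 + 5 - (2 * G + 4) = 1 := by omega
      have e2 : 2 * G + 0 + 3 - (2 * G + 4) = 0 := by omega
      have e3 : 2 * G + 0 + 3 - (2 * G + 2) = 1 := by omega
      have e4 : 2 * G + 0 + 3 - (2 * G + 3) = 0 := by omega
      rw [e1, e2, e3, e4, sgn]
      simp [Ssum_zero, Ssum_one]
    · -- C = 2G + 1
      have e1 : 2 * G + 1 + 5 - (2 * G + 4) = 2 := by omega
      have e2 : 2 * G + 1 + 3 - (2 * G + 4) = 0 := by omega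
      have e3 : 2 * G + 1 + 3 - (2 * G + 2) = 2 := by omega
      have e4 : 2 * G + 1 + 3 - (2 * G + 3) = 1 := by omega
      have e4' : 2 * G + 1 + 3 - (2 * G + 3) - 1 = 0 := by omega
      rw [e1, e2, e3, e4', e4, sgn]
      have hx : (-1 : ℤ) ^ (2 * G + 1 + 2) = -1 := by
        have : Odd (2 * G + 1 + 2) := ⟨G + 1, by omega⟩
        exact this.neg_one_pow
      rw [hx, Ssum_two, Ssum_two, Ssum_zero, Ssum_one]
      push_cast
      ring
    · -- C = 2G + 2 + j
      have e1 : 2 * G + (j + 2) + 5 - (2 * G + 4) = j + 3 := by omega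
      have e2 : 2 * G + (j + 2) + 3 - (2 * G + 4) = j + 1 := by omega
      have e3 : 2 * G + (j + 2) + 3 - (2 * G + 2) = j + 3 := by omega
      have e4 : 2 * G + (j + 2) + 3 - (2 * G + 3) = j + 2 := by omega
      have e4' : 2 * G + (j + 2) + 3 - (2 * G + 3) - 1 = j + 1 := by omega
      rw [e1, e2, e3, e4', e4, sgn]
      have key : Ssum (2 * G + 4) (j + 3) - Ssum (2 * G + 4) (j + 1) - Ssum (2 * G + 2) (j + 3)
          = -2 * Ssum (2 * G + 3) (j + 2) := by
        have := lemma2 (2 * G + 1) (j + 1)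
        convert this using 3 <;> omega
      have hs1 : (-1 : ℤ) ^ (2 * G + (j + 2) + 2) = (-1 : ℤ) ^ j := by
        have : 2 * G + (j + 2) + 2 = j + 2 * (G + 2) := by omega
        rw [this, pow_add, pow_mul]; norm_num
      have hs2 : (-1 : ℤ) ^ (j + 1) = -(-1 : ℤ) ^ j := by ring
      rw [hs1, hs2]
      linear_combination ((-1 : ℤ) ^ j) * key

/-- For all integers c ≥ 5 and g ≥ 2,
t(c,g) + t_p(c,g) = t(c−2,g) + t_p(c−2,g) + t(c−2,g−1) + t_p(c−2,g−1) + 2·t_p(2c−4, 2g−1),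
i.e. the number of 2-bridge knots satisfies t̄(c,g) = t̄(c−2,g) + t̄(c−2,g−1) + t_p(2c−4,2g−1). -/
theorem tbar_recurrence (c g : ℕ) (hc : 5 ≤ c) (hg : 2 ≤ g) :
    tKnot c g + tpKnot c g =
      tKnot (c - 2) g + tpKnot (c - 2) g + tKnot (c - 2) (g - 1) + tpKnot (c - 2) (g - 1) +
        2 * tpKnot (2 * c - 4) (2 * g - 1) := by
  obtain ⟨C, rfl⟩ : ∃ C, c = C + 5 := ⟨c - 5, by omega⟩
  obtain ⟨G, rfl⟩ : ∃ G, g = G + 2 := ⟨g - 2, by omega⟩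
  have e1 : C + 5 - 2 = C + 3 := by omega
  have e2 : G + 2 - 1 = G + 1 := by omega
  have e3 : 2 * (C + 5) - 4 = 2 * C + 6 := by omega
  have e4 : 2 * (G + 2) - 1 = 2 * G + 3 := by omega
  rw [e1, e2, e3, e4]
  linarith [lemP C G, lemK C G]
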